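/- Let (X,d) be a complete locally compact metric space, μ a nonnegative σ-finite Radon measure on X, and G a topological group acting on X by homeomorphisms preserving μ-nullsets. Assume: (i) the action of G is properly discontinuous; (ii) the set S of points x ∈ X with nontrivial stabilizer G_x := {g ∈ G : gx = x} ≠ {1} satisfies μ(S) = 0; (iii) X is compactly generated by the action, i.e., there exists a compact K ⊂ X with GK = X. Then there exists a precompact Borel set B ⊂ X such that G·(closure of B) = X, μ(∂B) = 0, and μ(gB ∩ B) = 0 for every g ∈ G with g ≠ 1. -/

import Mathlib

open MeasureTheory Filter Topology Set Pointwise ENNReal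

/-- Properly discontinuous action. -/
def ProperlyDisc (G : Type*) (X : Type*) [SMul G X] [TopologicalSpace X] : Prop :=
  ∀ K : Set X, IsCompact K → {g : G | (g • K) ∩ K ≠ ∅}.Finite

section AuxTop

variable {Y : Type*} [TopologicalSpace Y]

private lemma aux_frontier_union (s t : Set Y) :
    frontier (s ∪ t) ⊆ frontier s ∪ frontier t :=
  (frontier_union_subset s t).trans
    (Set.union_subset_union Set.inter_subset_left Set.inter_subset_right)

private lemma aux_frontier_diff (s t : Set Y) :
    frontier (s \ t) ⊆ frontier s ∪ frontier t := by
  have h : s \ t = s ∩ tᶜ := rfl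
  rw [h]
  refine (frontier_inter_subset s tᶜ).trans ?_
  rw [frontier_compl]
  exact Set.union_subset_union Set.inter_subset_left Set.inter_subset_right

private lemma aux_frontier_biUnion {ι : Type*} (s : Finset ι) (f : ι → Set Y) :
    frontier (⋃ i ∈ s, f i) ⊆ ⋃ i ∈ s, frontier (f i) := by
  classical
  induction s using Finset.induction_on with
  | empty => simp
  | @insert a s ha ih =>
    rw [Finset.set_biUnion_insert]
    refine (aux_frontier_union _ _).trans ?_
    rw [Finset.set_biUnion_insert]
    exact Set.union_subset_union subset_rfl ih

private lemma aux_frontier_iUnion (f : ℕ → Set Y) :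
    frontier (⋃ i, f i) ⊆
      (closure (⋃ i, f i) \ ⋃ i, closure (f i)) ∪ ⋃ i, frontier (f i) := by
  intro x hx
  by_cases h : x ∈ ⋃ i, closure (f i)
  · obtain ⟨i, hi⟩ := Set.mem_iUnion.1 h
    by_cases h2 : x ∈ interior (f i)
    · exact absurd (interior_mono (Set.subset_iUnion f i) h2) hx.2
    · exact Or.inr (Set.mem_iUnion.2 ⟨i, hi, h2⟩)
  · exact Or.inl ⟨hx.1, h⟩

end AuxTop

section AuxSmul

variable {X : Type*} [TopologicalSpace X] {G : Type*} [Group G] [MulAction G X]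

/-- The homeomorphism given by the action of `g`. -/
private def smulH (hcont : ∀ g : G, Continuous fun x : X => g • x) (g : G) : X ≃ₜ X where
  toFun := fun x => g • x
  invFun := fun x => g⁻¹ • x
  left_inv := fun x => inv_smul_smul g x
  right_inv := fun x => smul_inv_smul g x
  continuous_toFun := hcont g
  continuous_invFun := hcont g⁻¹

private lemma smulH_image (hcont : ∀ g : G, Continuous fun x : X => g • x) (g : G)
    (s : Set X) : (smulH hcont g) '' s = g • s := by
  simp only [smulH, Homeomorph.homeomorph_mk_coe, Equiv.coe_fn_mk]
  exact Set.image_smul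

private lemma aux_isOpen_smul (hcont : ∀ g : G, Continuous fun x : X => g • x) (g : G)
    {s : Set X} (hs : IsOpen s) : IsOpen (g • s) := by
  rw [← smulH_image hcont]
  exact (smulH hcont g).isOpenMap s hs

private lemma aux_frontier_smul (hcont : ∀ g : G, Continuous fun x : X => g • x) (g : G)
    (s : Set X) : frontier (g • s) = g • frontier s := by
  rw [← smulH_image hcont, ← smulH_image hcont, Homeomorph.image_frontier]

end AuxSmul

/-- **Lemma A.1 (existence of a fundamental domain).** Let `X` be a complete
locally compact metric space, `μ` a nonnegative σ-finite Radon measure and `G`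
a topological group acting on `X` by homeomorphisms preserving `μ`-nullsets.
If (i) the action is properly discontinuous, (ii) the set of points with
nontrivial stabilizer has `μ`-measure zero, and (iii) there is a compact `K`
with `GK = X`, then there is a precompact Borel set `B` with `G·closure(B) = X`,
`μ(∂B) = 0` and `μ(gB ∩ B) = 0` for all `g ≠ 1`. -/
theorem exists_fundamental_domain
    {X : Type*} [MetricSpace X] [CompleteSpace X] [LocallyCompactSpace X]
    [MeasurableSpace X] [BorelSpace X]
    (μ : Measure X) [SigmaFinite μ] [μ.Regular]
    {G : Type*} [Group G] [TopologicalSpace G] [IsTopologicalGroup G] [MulAction G X]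
    (hcont : ∀ g : G, Continuous fun x : X => g • x)
    (hnull : ∀ (g : G) (N : Set X), μ N = 0 → μ (g • N) = 0)
    -- (i)
    (hPD : ProperlyDisc G X)
    -- (ii)
    (hstab : μ {x : X | ∃ g : G, g ≠ 1 ∧ g • x = x} = 0)
    -- (iii)
    (K : Set X) (hK : IsCompact K) (hKX : (⋃ g : G, g • K) = Set.univ) :
    ∃ B : Set X, MeasurableSet B ∧ IsCompact (closure B) ∧
      (⋃ g : G, g • closure B) = Set.univ ∧
      μ (frontier B) = 0 ∧
      ∀ g : G, g ≠ 1 → μ ((g • B) ∩ B) = 0 := by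
  classical
  set S : Set X := {x : X | ∃ g : G, g ≠ 1 ∧ g • x = x} with hS_def
  -- an open precompact neighborhood of K
  obtain ⟨L₀, hL₀c, hKL₀⟩ := exists_compact_superset hK
  set A : Set X := interior L₀ with hA_def
  have hA_open : IsOpen A := isOpen_interior
  have hKA : K ⊆ A := hKL₀
  set C : Set X := closure A with hC_def
  have hC_closed : IsClosed C := isClosed_closure
  have hCc : IsCompact C :=
    hL₀c.of_isClosed_subset isClosed_closure (closure_minimal interior_subset hL₀c.isClosed)
  have hAC : A ⊆ C := subset_closure
  -- the finite set of elements moving C into itself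
  set F : Set G := {g : G | ((g • C) ∩ C).Nonempty} with hF_def
  have hF : F.Finite := by
    have := hPD C hCc
    refine this.subset ?_
    intro g hg
    exact Set.nonempty_iff_ne_empty.1 hg
  have hFmem : ∀ (g : G) (y : X), y ∈ C → g • y ∈ C → g ∈ F := by
    intro g y hy hgy
    exact ⟨g • y, Set.smul_mem_smul_set hy, hgy⟩
  have hFsymm : ∀ g : G, g ∈ F → g⁻¹ ∈ F := by
    rintro g ⟨z, hz1, hz2⟩
    obtain ⟨w, hw, rfl⟩ := hz1
    refine ⟨w, ?_, hw⟩
    rw [Set.mem_smul_set_iff_inv_smul_mem, inv_inv]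
    exact hz2
  -- S is closed
  have hS_closed : IsClosed S := by
    refine isClosed_of_closure_subset ?_
    intro x hx
    obtain ⟨L, hLc, hLn⟩ := exists_compact_mem_nhds x
    have hx' : x ∈ closure (S ∩ L) := by
      rw [mem_closure_iff_nhds] at hx ⊢
      intro t ht
      obtain ⟨y, hy⟩ := hx (t ∩ L) (inter_mem ht hLn)
      exact ⟨y, hy.1.1, hy.2, hy.1.2⟩
    have hFL := hPD L hLc
    have hsub : S ∩ L ⊆ ⋃ g ∈ {g : G | (g • L) ∩ L ≠ ∅ ∧ g ≠ 1}, {y : X | g • y = y} := by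
      rintro y ⟨⟨g, hg1, hgy⟩, hyL⟩
      refine Set.mem_biUnion ⟨?_, hg1⟩ hgy
      rw [← Set.nonempty_iff_ne_empty]
      exact ⟨g • y, Set.smul_mem_smul_set hyL, by rwa [hgy]⟩
    have hclosed : IsClosed (⋃ g ∈ {g : G | (g • L) ∩ L ≠ ∅ ∧ g ≠ 1}, {y : X | g • y = y}) := by
      refine Set.Finite.isClosed_biUnion (hFL.subset fun g hg => hg.1) ?_
      intro g _
      exact isClosed_eq (hcont g) continuous_id
    have hxm := (closure_minimal hsub hclosed) hx'
    simp only [Set.mem_iUnion, Set.mem_setOf_eq] at hxm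
    obtain ⟨g, ⟨_, hg1⟩, hgx⟩ := hxm
    exact ⟨g, hg1, hgx⟩
  -- the cut-off distance to S ∩ C
  set dS : X → ℝ :=
    if hne : (S ∩ C).Nonempty then (fun x => min (Metric.infDist x (S ∩ C)) 1)
    else (fun _ => 1) with hdS_def
  have hdS_cont : Continuous dS := by
    rw [hdS_def]
    split_ifs with h
    · exact (Metric.continuous_infDist_pt _).min continuous_const
    · exact continuous_const
  have hdS_le_one : ∀ x, dS x ≤ 1 := by
    intro x
    rw [hdS_def]
    split_ifs with h
    · exact min_le_right _ _
    · exact le_refl 1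
  have hdS_pos : ∀ x, x ∉ S → 0 < dS x := by
    intro x hx
    rw [hdS_def]
    split_ifs with h
    · refine lt_min ?_ one_pos
      refine ((hS_closed.inter hC_closed).notMem_iff_infDist_pos h).1 ?_
      exact fun hxc => hx hxc.1
    · exact one_pos
  have hdS_zero : ∀ x, x ∈ S → x ∈ C → dS x = 0 := by
    intro x hx hxc
    rw [hdS_def]
    have hne : (S ∩ C).Nonempty := ⟨x, hx, hxc⟩
    rw [dif_pos hne]
    show min (Metric.infDist x (S ∩ C)) 1 = 0
    have h0 : Metric.infDist x (S ∩ C) = 0 :=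
      Metric.infDist_zero_of_mem (Set.mem_inter hx hxc)
    rw [h0]
    norm_num
  have hdS_lip : ∀ x y : X, dS x ≤ dS y + dist x y := by
    intro x y
    rw [hdS_def]
    split_ifs with h
    · simp only
      rcases min_cases (Metric.infDist y (S ∩ C)) 1 with ⟨hy, _⟩ | ⟨hy, _⟩
      · rw [hy]
        refine le_trans (min_le_left _ _) ?_
        exact Metric.infDist_le_infDist_add_dist
      · rw [hy]
        refine le_trans (min_le_right _ _) ?_
        linarith [dist_nonneg (x := x) (y := y)]
    · show (1 : ℝ) ≤ 1 + dist x y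
      linarith [dist_nonneg (x := x) (y := y)]
  -- the shells
  set T : ℕ → Set X := fun m =>
    K ∩ {x : X | 1 / ((m : ℝ) + 2) ≤ dS x ∧ dS x ≤ 1 / ((m : ℝ) + 1)} with hT_def
  have hT_compact : ∀ m, IsCompact (T m) := by
    intro m
    refine hK.inter_right ?_
    exact (isClosed_le continuous_const hdS_cont).inter (isClosed_le hdS_cont continuous_const)
  have hT_subK : ∀ m, T m ⊆ K := fun m => Set.inter_subset_left
  have hT_notS : ∀ m, ∀ x ∈ T m, x ∉ S := by
    intro m x hx hxS
    have h0 : dS x = 0 := hdS_zero x hxS (hAC (hKA (hx.1)))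
    have h1 : (0 : ℝ) < 1 / ((m : ℝ) + 2) := by positivity
    have h2 : 1 / ((m : ℝ) + 2) ≤ dS x := hx.2.1
    rw [h0] at h2
    linarith
  have hT_cover : ∀ x, x ∈ K → x ∉ S → ∃ m : ℕ, x ∈ T m := by
    intro x hxK hxS
    have hpos : 0 < dS x := hdS_pos x hxS
    have hex : ∃ m : ℕ, 1 / ((m : ℝ) + 2) ≤ dS x := by
      obtain ⟨N, hN⟩ := exists_nat_gt (1 / dS x)
      refine ⟨N, ?_⟩
      rw [div_le_iff₀ (by positivity)]
      rw [div_lt_iff₀ hpos] at hN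
      nlinarith [hpos, dist_nonneg (x := x) (y := x)]
    set m₀ := Nat.find hex with hm₀
    have hlo : 1 / ((m₀ : ℝ) + 2) ≤ dS x := Nat.find_spec hex
    have hhi : dS x ≤ 1 / ((m₀ : ℝ) + 1) := by
      rcases Nat.eq_zero_or_pos m₀ with h0 | h0
      · rw [h0]
        simpa using hdS_le_one x
      · obtain ⟨j, hj⟩ := Nat.exists_eq_succ_of_ne_zero h0.ne'
        have hmin := Nat.find_min hex (m := j) (by omega)
        push_neg at hmin
        have hcast : ((j : ℝ) + 2) = ((j + 1 : ℕ) : ℝ) + 1 := by push_cast; ring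
        rw [hcast] at hmin
        rw [hj]
        exact hmin.le
    exact ⟨m₀, hxK, hlo, hhi⟩
  -- nice balls
  have hball : ∀ (m : ℕ) (x : X), x ∈ T m → ∃ r : ℝ,
      0 < r ∧ r ≤ 1 / ((m : ℝ) + 2) ∧ μ (Metric.sphere x r) = 0 ∧ Metric.ball x r ⊆ A ∧
      ∀ g : G, g ≠ 1 → (g • Metric.ball x r) ∩ Metric.ball x r = ∅ := by
    intro m x hx
    have hxA : x ∈ A := hKA (hT_subK m hx)
    have hxS : x ∉ S := hT_notS m x hx
    obtain ⟨εA, hεA, hballA⟩ := Metric.isOpen_iff.1 hA_open x hxA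
    -- for each nontrivial g in F, a small radius works
    have hg_bound : ∀ g ∈ hF.toFinset.erase 1, ∃ d : ℝ, 0 < d ∧
        ∀ r : ℝ, r ≤ d → (g • Metric.ball x r) ∩ Metric.ball x r = ∅ := by
      intro g hg
      have hg1 : g ≠ 1 := Finset.ne_of_mem_erase hg
      have hgx : g • x ≠ x := fun h => hxS ⟨g, hg1, h⟩
      have hd3 : 0 < dist (g • x) x / 3 := by
        have := dist_pos.2 hgx
        linarith
      obtain ⟨δ, hδ, hδ'⟩ := Metric.continuous_iff.1 (hcont g) x (dist (g • x) x / 3) hd3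
      refine ⟨min δ (dist (g • x) x / 3), lt_min hδ hd3, ?_⟩
      intro r hr
      rw [Set.eq_empty_iff_forall_notMem]
      rintro z ⟨hz1, hz2⟩
      obtain ⟨y, hy, rfl⟩ := hz1
      have h1 : dist y x < δ :=
        lt_of_lt_of_le (Metric.mem_ball.1 hy) (hr.trans (min_le_left _ _))
      have h2 : dist (g • y) (g • x) < dist (g • x) x / 3 := hδ' y h1
      have h3 : dist (g • y) x < dist (g • x) x / 3 :=
        lt_of_lt_of_le (Metric.mem_ball.1 hz2) (hr.trans (min_le_right _ _))
      have h4 : dist (g • x) x ≤ dist (g • x) (g • y) + dist (g • y) x := dist_triangle _ _ _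
      rw [dist_comm (g • x) (g • y)] at h4
      linarith
    choose! d hd_pos hd_spec using hg_bound
    obtain ⟨ρ, hρ, hρle⟩ : ∃ ρ : ℝ, 0 < ρ ∧ ∀ g ∈ hF.toFinset.erase 1, ρ ≤ d g := by
      rcases Finset.eq_empty_or_nonempty (hF.toFinset.erase 1) with he | hne
      · exact ⟨1, one_pos, by simp [he]⟩
      · obtain ⟨g₀, hg₀, hmin⟩ := Finset.exists_min_image _ d hne
        exact ⟨d g₀, hd_pos g₀ hg₀, fun g hg => hmin g hg⟩
    set ρ' : ℝ := min (min ρ εA) (1 / ((m : ℝ) + 2)) with hρ'_def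
    have hρ'pos : 0 < ρ' := lt_min (lt_min hρ hεA) (by positivity)
    -- choose a radius with null sphere
    have hcnt : Set.Countable {r : ℝ | 0 < μ (Metric.sphere x r)} := by
      refine Measure.countable_meas_pos_of_disjoint_iUnion
        (As := fun r : ℝ => Metric.sphere x r) (fun r => ?_) ?_
      · exact (isClosed_singleton.preimage (continuous_id.dist continuous_const)).measurableSet
      · intro r1 r2 hne
        refine Set.disjoint_left.2 fun z hz1 hz2 => hne ?_
        rw [← Metric.mem_sphere.1 hz1, ← Metric.mem_sphere.1 hz2]
    have hIoo : ¬ (Set.Ioo (0 : ℝ) ρ' ⊆ {r : ℝ | 0 < μ (Metric.sphere x r)}) := by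
      intro hsub
      have hc : (Set.Ioo (0 : ℝ) ρ').Countable := hcnt.mono hsub
      have := Set.Countable.le_aleph0 hc
      rw [Cardinal.mk_Ioo_real hρ'pos] at this
      exact absurd this (not_le.2 Cardinal.aleph0_lt_continuum)
    obtain ⟨r, hrIoo, hrnull⟩ := Set.not_subset.1 hIoo
    simp only [Set.mem_setOf_eq, not_lt, le_zero_iff] at hrnull
    refine ⟨r, hrIoo.1, le_trans hrIoo.2.le (min_le_right _ _), hrnull, ?_, ?_⟩
    · refine Set.Subset.trans ?_ hballA
      exact Metric.ball_subset_ball (le_trans hrIoo.2.le ((min_le_left _ _).trans (min_le_right _ _)))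
    · intro g hg1
      by_cases hgF : g ∈ F
      · refine hd_spec g (Finset.mem_erase.2 ⟨hg1, hF.mem_toFinset.2 hgF⟩) r ?_
        refine le_trans hrIoo.2.le ?_
        exact le_trans ((min_le_left _ _).trans (min_le_left _ _)) (hρle g (Finset.mem_erase.2 ⟨hg1, hF.mem_toFinset.2 hgF⟩))
      · rw [Set.eq_empty_iff_forall_notMem]
        rintro z ⟨hz1, hz2⟩
        obtain ⟨y, hy, rfl⟩ := hz1
        have hyC : y ∈ C := hAC (hballA (Metric.ball_subset_ball
          (le_trans hrIoo.2.le ((min_le_left _ _).trans (min_le_right _ _))) hy))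
        have hzC : g • y ∈ C := hAC (hballA (Metric.ball_subset_ball
          (le_trans hrIoo.2.le ((min_le_left _ _).trans (min_le_right _ _))) hz2))
        exact hgF (hFmem g y hyC hzC)
  choose! rad hrad_pos hrad_cap hrad_sphere hrad_A hrad_nice using hball
  -- finite subcovers of the shells
  have hLm : ∀ m : ℕ, ∃ l : List X, (∀ x ∈ l, x ∈ T m) ∧
      T m ⊆ ⋃ x ∈ l, Metric.ball x (rad m x) := by
    intro m
    obtain ⟨b', hb'sub, hb'fin, hb'cov⟩ :=
      (hT_compact m).elim_finite_subcover_image (b := T m)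
        (c := fun x => Metric.ball x (rad m x)) (fun x _ => Metric.isOpen_ball)
        (fun x hx => Set.mem_biUnion hx (Metric.mem_ball_self (hrad_pos m x hx)))
    refine ⟨hb'fin.toFinset.toList, ?_, ?_⟩
    · intro x hx
      rw [Finset.mem_toList, Set.Finite.mem_toFinset] at hx
      exact hb'sub hx
    · intro x hx
      have := hb'cov hx
      simp only [Set.mem_iUnion, exists_prop] at this ⊢
      obtain ⟨i, hi, h⟩ := this
      exact ⟨i, by rw [Finset.mem_toList, Set.Finite.mem_toFinset]; exact hi, h⟩
  choose Ls hLs1 hLs2 using hLm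
  -- the countable family of nice balls
  set v : ℕ → ℕ → Set X := fun m k =>
    if h : k < (Ls m).length
    then Metric.ball ((Ls m).get ⟨k, h⟩) (rad m ((Ls m).get ⟨k, h⟩))
    else ∅ with hv_def
  set u : ℕ → Set X := fun n => v n.unpair.1 n.unpair.2 with hu_def
  have hu_pair : ∀ m k : ℕ, u (Nat.pair m k) = v m k := by
    intro m k
    rw [hu_def]
    simp only [Nat.unpair_pair]
  have hv_cases : ∀ m k : ℕ, v m k = ∅ ∨ ∃ x, x ∈ T m ∧
      v m k = Metric.ball x (rad m x) := by
    intro m k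
    by_cases h : k < (Ls m).length
    · right
      refine ⟨(Ls m).get ⟨k, h⟩, hLs1 _ _ (List.get_mem _ _), by rw [hv_def]; simp [h]⟩
    · left
      rw [hv_def]
      simp [h]
  have hu_cases : ∀ n : ℕ, u n = ∅ ∨ ∃ x, x ∈ T n.unpair.1 ∧
      u n = Metric.ball x (rad n.unpair.1 x) := by
    intro n
    rw [hu_def]
    exact hv_cases n.unpair.1 n.unpair.2
  have hu_open : ∀ n, IsOpen (u n) := by
    intro n
    rcases hu_cases n with h | ⟨x, _, h⟩ <;> rw [h]
    · exact isOpen_empty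
    · exact Metric.isOpen_ball
  have hu_subA : ∀ n, u n ⊆ A := by
    intro n
    rcases hu_cases n with h | ⟨x, hx, h⟩ <;> rw [h]
    · exact Set.empty_subset A
    · exact hrad_A _ _ hx
  have hu_frontier : ∀ n, μ (frontier (u n)) = 0 := by
    intro n
    rcases hu_cases n with h | ⟨x, hx, h⟩ <;> rw [h]
    · simp
    · exact measure_mono_null Metric.frontier_ball_subset_sphere (hrad_sphere _ _ hx)
  have hu_nice : ∀ n, ∀ g : G, g ≠ 1 → (g • u n) ∩ u n = ∅ := by
    intro n g hg
    rcases hu_cases n with h | ⟨x, hx, h⟩ <;> rw [h]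
    · simp
    · exact hrad_nice _ _ hx g hg
  have hu_dS : ∀ n, ∀ z ∈ u n, dS z ≤ 2 / ((n.unpair.1 : ℝ) + 1) := by
    intro n z hz
    rcases hu_cases n with h | ⟨x, hx, h⟩
    · rw [h] at hz; exact absurd hz (Set.notMem_empty z)
    · rw [h] at hz
      have h1 : dS z ≤ dS x + dist z x := hdS_lip z x
      have h2 : dist z x < rad n.unpair.1 x := Metric.mem_ball.1 hz
      have h3 : rad n.unpair.1 x ≤ 1 / ((n.unpair.1 : ℝ) + 2) := hrad_cap _ _ hx
      have h4 : dS x ≤ 1 / ((n.unpair.1 : ℝ) + 1) := hx.2.2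
      have h5 : (1 : ℝ) / ((n.unpair.1 : ℝ) + 2) ≤ 1 / ((n.unpair.1 : ℝ) + 1) := by
        apply one_div_le_one_div_of_le
        · positivity
        · linarith
      have h6 : (2 : ℝ) / ((n.unpair.1 : ℝ) + 1)
          = 1 / ((n.unpair.1 : ℝ) + 1) + 1 / ((n.unpair.1 : ℝ) + 1) := by ring
      linarith
  -- the cover property
  have hu_cover : K \ S ⊆ ⋃ n, u n := by
    rintro x ⟨hxK, hxS⟩
    obtain ⟨m, hm⟩ := hT_cover x hxK hxS
    have := hLs2 m hm
    simp only [Set.mem_iUnion, exists_prop] at this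
    obtain ⟨c, hc, hxb⟩ := this
    obtain ⟨k, hk⟩ := List.mem_iff_get.1 hc
    refine Set.mem_iUnion.2 ⟨Nat.pair m k.1, ?_⟩
    rw [hu_pair]
    simp only [hv_def]
    rw [dif_pos k.2]
    have hgc : (Ls m).get ⟨k.1, k.2⟩ = c := by
      rw [Fin.eta]
      exact hk
    rw [hgc]
    exact hxb
  -- local finiteness away from S
  have hlocfin : ∀ y : X, y ∉ S →
      ∃ V : Set X, IsOpen V ∧ y ∈ V ∧ {n : ℕ | (u n ∩ V).Nonempty}.Finite := by
    intro y hy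
    have hδ : 0 < dS y := hdS_pos y hy
    obtain ⟨M, hM⟩ : ∃ M : ℕ, (4 : ℝ) / dS y < M := exists_nat_gt _
    set V : Set X := {z : X | dS y / 2 < dS z} with hV_def
    have hVopen : IsOpen V := isOpen_lt continuous_const hdS_cont
    have hyV : y ∈ V := by
      rw [hV_def]
      simp only [Set.mem_setOf_eq]
      linarith
    refine ⟨V, hVopen, hyV, ?_⟩
    set Mx : ℕ := (Finset.range (M + 1)).sup (fun m => (Ls m).length) with hMx_def
    refine Set.Finite.subset
      ((Finset.range (M + 1) ×ˢ Finset.range (Mx + 1)).finite_toSet.image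
        (fun p => Nat.pair p.1 p.2)) ?_
    rintro n ⟨z, hzu, hzV⟩
    have hne : u n ≠ ∅ := fun h => by rw [h] at hzu; exact Set.notMem_empty z hzu
    have hlt : n.unpair.2 < (Ls n.unpair.1).length := by
      by_contra h
      refine hne ?_
      rw [hu_def]
      simp only
      rw [hv_def]
      simp [h]
    -- the shell index is at most M
    have hmM : n.unpair.1 ≤ M := by
      by_contra h
      push_neg at h
      have h1 : dS z ≤ 2 / ((n.unpair.1 : ℝ) + 1) := hu_dS n z hzu
      have h2 : dS y / 2 < dS z := hzV
      have h3 : (M : ℝ) + 1 ≤ (n.unpair.1 : ℝ) + 1 := by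
        have : (M : ℝ) ≤ (n.unpair.1 : ℝ) := by exact_mod_cast h.le
        linarith
      have h4 : 2 / ((n.unpair.1 : ℝ) + 1) ≤ 2 / ((M : ℝ) + 1) := by
        apply div_le_div_of_nonneg_left (by norm_num) (by positivity) h3
      have h5 : 2 / ((M : ℝ) + 1) < dS y / 2 := by
        rw [div_lt_div_iff₀ (by positivity) (by norm_num)]
        rw [div_lt_iff₀ hδ] at hM
        nlinarith [hδ]
      linarith
    refine ⟨(n.unpair.1, n.unpair.2), ?_, Nat.pair_unpair n⟩
    simp only [Finset.mem_coe, Finset.mem_product, Finset.mem_range]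
    constructor
    · omega
    · have hlen : (Ls n.unpair.1).length ≤ Mx := by
        rw [hMx_def]
        exact Finset.le_sup (f := fun m => (Ls m).length)
          (Finset.mem_range.2 (Nat.lt_succ_of_le hmM))
      omega
  -- the disjointified sets
  set W : ℕ → Set X := fun n =>
    u n \ ⋃ i ∈ Finset.range n, ⋃ g ∈ hF.toFinset, g • u i with hW_def
  have hW_sub : ∀ n, W n ⊆ u n := fun n => Set.diff_subset
  set Wb : Set X := ⋃ n, W n with hWb_def
  set E : Set X := S ∩ C with hE_def
  set B : Set X := Wb ∪ E with hB_def
  have hWb_subA : Wb ⊆ A := by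
    rw [hWb_def]
    exact Set.iUnion_subset fun n => (hW_sub n).trans (hu_subA n)
  have hB_subC : B ⊆ C := by
    rw [hB_def]
    exact Set.union_subset (hWb_subA.trans hAC) Set.inter_subset_right
  -- measurability
  have hmeas : MeasurableSet B := by
    refine MeasurableSet.union ?_ ((hS_closed.inter hC_closed).measurableSet)
    refine MeasurableSet.iUnion fun n => ?_
    refine ((hu_open n).measurableSet).diff ?_
    refine (isOpen_biUnion fun i _ => isOpen_biUnion fun g _ => ?_).measurableSet
    exact aux_isOpen_smul hcont g (hu_open i)
  -- compact closure
  have hclosB : IsCompact (closure B) :=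
    hCc.of_isClosed_subset isClosed_closure (closure_minimal hB_subC hC_closed)
  -- covering property
  have hWcov : ∀ n : ℕ, ∀ y ∈ u n, ∃ h : G, y ∈ h • Wb := by
    intro n
    induction n using Nat.strong_induction_on with
    | _ n IH =>
      intro y hy
      by_cases hw : y ∈ W n
      · exact ⟨1, by rw [one_smul]; exact Set.mem_iUnion.2 ⟨n, hw⟩⟩
      · have hmem : y ∈ ⋃ i ∈ Finset.range n, ⋃ g ∈ hF.toFinset, g • u i := by
          by_contra hc
          exact hw ⟨hy, hc⟩
        simp only [Set.mem_iUnion, Finset.mem_range, exists_prop] at hmem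
        obtain ⟨i, hi, g, _, hyg⟩ := hmem
        have hyi : g⁻¹ • y ∈ u i := by
          rwa [← Set.mem_smul_set_iff_inv_smul_mem]
        obtain ⟨h, hh⟩ := IH i hi _ hyi
        refine ⟨g * h, ?_⟩
        rw [mul_smul]
        rwa [Set.mem_smul_set_iff_inv_smul_mem]
  have hcover : (⋃ g : G, g • closure B) = Set.univ := by
    rw [Set.eq_univ_iff_forall]
    intro y
    have hy : y ∈ ⋃ g : G, g • K := hKX ▸ Set.mem_univ y
    obtain ⟨g, hg⟩ := Set.mem_iUnion.1 hy
    obtain ⟨k, hkK, rfl⟩ := hg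
    by_cases hkS : k ∈ S
    · refine Set.mem_iUnion.2 ⟨g, Set.smul_mem_smul_set ?_⟩
      exact subset_closure (Or.inr ⟨hkS, hAC (hKA hkK)⟩)
    · obtain ⟨n, hn⟩ := Set.mem_iUnion.1 (hu_cover ⟨hkK, hkS⟩)
      obtain ⟨h, hh⟩ := hWcov n k hn
      refine Set.mem_iUnion.2 ⟨g * h, ?_⟩
      rw [mul_smul]
      refine Set.smul_mem_smul_set ?_
      refine Set.smul_set_mono ?_ hh
      exact (Set.subset_union_left.trans subset_closure :
        Wb ⊆ closure B)
  -- frontier of each W n is null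
  have hWn_frontier : ∀ n, μ (frontier (W n)) = 0 := by
    intro n
    have h1 : frontier (W n) ⊆ frontier (u n) ∪
        frontier (⋃ i ∈ Finset.range n, ⋃ g ∈ hF.toFinset, g • u i) :=
      aux_frontier_diff _ _
    have h2 : frontier (⋃ i ∈ Finset.range n, ⋃ g ∈ hF.toFinset, g • u i) ⊆
        ⋃ i ∈ Finset.range n, ⋃ g ∈ hF.toFinset, frontier (g • u i) := by
      refine (aux_frontier_biUnion _ _).trans ?_
      refine Set.iUnion₂_mono fun i _ => ?_
      exact aux_frontier_biUnion _ _
    have h3 : μ (⋃ i ∈ Finset.range n, ⋃ g ∈ hF.toFinset, frontier (g • u i)) = 0 := by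
      refine (measure_biUnion_null_iff (Finset.range n).countable_toSet).2 fun i _ => ?_
      refine (measure_biUnion_null_iff hF.toFinset.countable_toSet).2 fun g _ => ?_
      rw [aux_frontier_smul hcont]
      exact hnull g _ (hu_frontier i)
    refine measure_mono_null (h1.trans (Set.union_subset_union subset_rfl h2)) ?_
    exact measure_union_null (hu_frontier n) h3
  -- frontier of Wb is null
  have hWb_frontier : μ (frontier Wb) = 0 := by
    have h1 : frontier Wb ⊆
        (closure Wb \ ⋃ n, closure (W n)) ∪ ⋃ n, frontier (W n) := by
      rw [hWb_def]
      exact aux_frontier_iUnion W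
    have hZ : closure Wb \ (⋃ n, closure (W n)) ⊆ S := by
      rintro y ⟨hyc, hyn⟩
      by_contra hyS
      obtain ⟨V, hVo, hyV, hVfin⟩ := hlocfin y hyS
      have h2 : y ∈ closure (Wb ∩ V) := by
        rw [mem_closure_iff_nhds] at hyc ⊢
        intro t ht
        obtain ⟨z, hz⟩ := hyc (t ∩ V) (inter_mem ht (hVo.mem_nhds hyV))
        exact ⟨z, hz.1.1, hz.2, hz.1.2⟩
      have h3 : Wb ∩ V ⊆ ⋃ n ∈ hVfin.toFinset, W n := by
        rintro z ⟨hzW, hzV⟩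
        obtain ⟨n, hn⟩ := Set.mem_iUnion.1 hzW
        exact Set.mem_biUnion (hVfin.mem_toFinset.2 ⟨z, hW_sub n hn, hzV⟩) hn
      have h4 : closure (Wb ∩ V) ⊆ ⋃ n ∈ hVfin.toFinset, closure (W n) := by
        refine closure_minimal (h3.trans (Set.iUnion₂_mono fun n _ => subset_closure)) ?_
        exact Set.Finite.isClosed_biUnion hVfin.toFinset.finite_toSet
          fun n _ => isClosed_closure
      have h5 := h4 h2
      simp only [Set.mem_iUnion, exists_prop] at h5
      obtain ⟨n, _, hn⟩ := h5
      exact hyn (Set.mem_iUnion.2 ⟨n, hn⟩)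
    refine measure_mono_null h1 ?_
    refine measure_union_null (measure_mono_null hZ hstab) ?_
    exact measure_iUnion_null hWn_frontier
  -- frontier of B is null
  have hfrontier : μ (frontier B) = 0 := by
    have h1 : frontier B ⊆ frontier Wb ∪ frontier E := by
      rw [hB_def]
      exact aux_frontier_union _ _
    have h2 : frontier E ⊆ E :=
      (hS_closed.inter hC_closed).frontier_subset
    refine measure_mono_null h1 ?_
    refine measure_union_null hWb_frontier ?_
    exact measure_mono_null (h2.trans Set.inter_subset_left) hstab
  -- overlaps are null
  have hWW : ∀ g : G, g ≠ 1 → (g • Wb) ∩ Wb = ∅ := by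
    intro g hg1
    rw [Set.eq_empty_iff_forall_notMem]
    rintro y ⟨hy1, hy2⟩
    obtain ⟨i, hyi⟩ := Set.mem_iUnion.1 hy2
    have hy1' : g⁻¹ • y ∈ Wb := Set.mem_smul_set_iff_inv_smul_mem.1 hy1
    obtain ⟨j, hyj⟩ := Set.mem_iUnion.1 hy1'
    have hyC : y ∈ C := hAC (hu_subA i (hW_sub i hyi))
    have hyC' : g⁻¹ • y ∈ C := hAC (hu_subA j (hW_sub j hyj))
    have hgF : g⁻¹ ∈ F := hFmem g⁻¹ y hyC hyC'
    have hgF' : g ∈ F := by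
      have := hFsymm g⁻¹ hgF
      rwa [inv_inv] at this
    rcases lt_trichotomy i j with hij | hij | hij
    · refine hyj.2 ?_
      refine Set.mem_biUnion (Finset.mem_range.2 hij) ?_
      refine Set.mem_biUnion (hF.mem_toFinset.2 hgF) ?_
      exact Set.smul_mem_smul_set hyi.1
    · subst hij
      have hnice := hu_nice i g hg1
      have hy_in : y ∈ (g • u i) ∩ u i := by
        refine ⟨?_, hyi.1⟩
        rw [Set.mem_smul_set_iff_inv_smul_mem]
        exact hyj.1
      rw [hnice] at hy_in
      exact Set.notMem_empty y hy_in
    · refine hyi.2 ?_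
      refine Set.mem_biUnion (Finset.mem_range.2 hij) ?_
      refine Set.mem_biUnion (hF.mem_toFinset.2 hgF') ?_
      rw [Set.mem_smul_set_iff_inv_smul_mem]
      exact hyj.1
  have hoverlap : ∀ g : G, g ≠ 1 → μ ((g • B) ∩ B) = 0 := by
    intro g hg1
    have hE_null : μ E = 0 := measure_mono_null Set.inter_subset_left hstab
    have hgE_null : μ (g • E) = 0 := hnull g E hE_null
    have hsub : (g • B) ∩ B ⊆ (g • E) ∪ E := by
      rintro z ⟨hz1, hz2⟩
      rw [hB_def, Set.smul_set_union] at hz1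
      rcases hz1 with h1 | h1
      · rcases hz2 with h2 | h2
        · exfalso
          have : z ∈ (g • Wb) ∩ Wb := ⟨h1, h2⟩
          rw [hWW g hg1] at this
          exact Set.notMem_empty z this
        · exact Or.inr h2
      · exact Or.inl h1
    exact measure_mono_null hsub (measure_union_null hgE_null hE_null)
  exact ⟨B, hmeas, hclosB, hcover, hfrontier, hoverlap⟩
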